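/- arXiv:1111.5884 — 6 statements merged into one kernel-verified Lean document; each statement's English description precedes it below -/
import Mathlib

section
/- If A, B ⊆ 𝔽₂ⁿ are nonempty sets with duality measure D(A,B) = 1, then A is contained in a single affine coset of the orthogonal complement of the 𝔽₂-span of B. -/
open Finset

/-- The ±1 character of an element of `ZMod 2`. -/
noncomputable def chi (x : ZMod 2) : ℝ := if x = 0 then 1 else -1

/-- The `𝔽₂` inner product on `𝔽₂ⁿ`. -/
def ip {n : ℕ} (a b : Fin n → ZMod 2) : ZMod 2 := ∑ i, a i * b i

/-- The duality measure `D(A,B) = |𝔼_{a∈A,b∈B} (-1)^{⟨a,b⟩}|`. -/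
noncomputable def Dm {n : ℕ} (A B : Finset (Fin n → ZMod 2)) : ℝ :=
  |∑ a ∈ A, ∑ b ∈ B, chi (ip a b)| / ((A.card : ℝ) * B.card)

lemma chi_le_one (x : ZMod 2) : chi x ≤ 1 := by
  unfold chi; split <;> norm_num

lemma neg_one_le_chi (x : ZMod 2) : -1 ≤ chi x := by
  unfold chi; split <;> norm_num

lemma chi_eq_one_iff (x : ZMod 2) : chi x = 1 ↔ x = 0 := by
  unfold chi; split <;> simp_all <;> norm_num

lemma chi_eq_neg_one_iff (x : ZMod 2) : chi x = -1 ↔ x ≠ 0 := by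
  unfold chi; split <;> simp_all <;> norm_num

lemma zmod2_ne_zero (x : ZMod 2) (h : x ≠ 0) : x = 1 := by revert x; decide

lemma ip_add_left {n : ℕ} (a c b : Fin n → ZMod 2) :
    ip (a + c) b = ip a b + ip c b := by
  unfold ip
  rw [← Finset.sum_add_distrib]
  exact Finset.sum_congr rfl fun i _ => by simp [add_mul]

/-- If `D(A,B) = 1` then `A` lies in a single affine coset of the orthogonal
complement of the `𝔽₂`-span of `B`. -/
theorem stmt_0 {n : ℕ} (A B : Finset (Fin n → ZMod 2))
    (hA : A.Nonempty) (hB : B.Nonempty) (h : Dm A B = 1) :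
    ∃ x₀ : Fin n → ZMod 2, ∀ a ∈ A, ∀ b ∈ B, ip (a + x₀) b = 0 := by
  have hN : (0:ℝ) < (A.card : ℝ) * B.card := by
    have := hA.card_pos; have := hB.card_pos; positivity
  have habs : |∑ a ∈ A, ∑ b ∈ B, chi (ip a b)| = (A.card : ℝ) * B.card := by
    have := h
    unfold Dm at this
    field_simp at this
    linarith [this]
  have hsum : ∑ p ∈ A ×ˢ B, chi (ip p.1 p.2) = ∑ a ∈ A, ∑ b ∈ B, chi (ip a b) := by
    rw [Finset.sum_product]
  have hcard : ((A ×ˢ B).card : ℝ) = (A.card : ℝ) * B.card := by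
    rw [Finset.card_product]; push_cast; ring
  rcases abs_eq (le_of_lt hN) |>.mp habs with hpos | hneg
  · -- all chi = 1, so ip a b = 0; take x₀ = 0
    have hzero : ∑ p ∈ A ×ˢ B, (1 - chi (ip p.1 p.2)) = 0 := by
      rw [Finset.sum_sub_distrib, Finset.sum_const, nsmul_eq_mul, mul_one, hsum, hpos, hcard,
        sub_self]
    have hall : ∀ p ∈ A ×ˢ B, (1 - chi (ip p.1 p.2)) = 0 := by
      intro p hp
      exact (Finset.sum_eq_zero_iff_of_nonneg
        (fun q _ => by linarith [chi_le_one (ip q.1 q.2)])).mp hzero p hp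
    refine ⟨0, fun a ha b hb => ?_⟩
    have := hall (a, b) (Finset.mk_mem_product ha hb)
    have : chi (ip a b) = 1 := by linarith
    have h0 : ip a b = 0 := (chi_eq_one_iff _).mp this
    rw [ip_add_left, h0, zero_add]
    simp [ip]
  · -- all chi = -1, so ip a b = 1; take x₀ = a₀
    obtain ⟨a₀, ha₀⟩ := hA
    have hzero : ∑ p ∈ A ×ˢ B, (chi (ip p.1 p.2) + 1) = 0 := by
      rw [Finset.sum_add_distrib, Finset.sum_const, nsmul_eq_mul, mul_one, hsum, hneg, hcard]
      ring
    have hall : ∀ p ∈ A ×ˢ B, (chi (ip p.1 p.2) + 1) = 0 := by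
      intro p hp
      exact (Finset.sum_eq_zero_iff_of_nonneg
        (fun q _ => by linarith [neg_one_le_chi (ip q.1 q.2)])).mp hzero p hp
    refine ⟨a₀, fun a ha b hb => ?_⟩
    have h1 : chi (ip a b) = -1 := by linarith [hall (a, b) (Finset.mk_mem_product ha hb)]
    have h2 : chi (ip a₀ b) = -1 := by linarith [hall (a₀, b) (Finset.mk_mem_product ha₀ hb)]
    have e1 : ip a b = 1 := zmod2_ne_zero _ ((chi_eq_neg_one_iff _).mp h1)
    have e2 : ip a₀ b = 1 := zmod2_ne_zero _ ((chi_eq_neg_one_iff _).mp h2)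
    rw [ip_add_left, e1, e2]
    decide
end

section
/- For nonempty finite A, B ⊆ 𝔽₂ⁿ with A ⊆ Spec_ε(B) for some ε > 0, one has 𝔼_{a,a'∈A}|𝔼_{b∈B}[(-1)^{⟨a+a',b⟩₂}]| ≥ ε². In particular, Pr_{a,a'∈A}[a + a' ∈ Spec_{ε²/2}(B)] ≥ ε²/2. -/
open Finset

/-- `Spec_α(B)`: vectors whose character average over `B` has absolute value at least `α`. -/
def Spec {n : ℕ} (α : ℝ) (B : Finset (Fin n → ZMod 2)) : Set (Fin n → ZMod 2) :=
  {x | α ≤ |∑ b ∈ B, chi (ip x b)| / (B.card : ℝ)}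

lemma chi_add (x y : ZMod 2) : chi (x + y) = chi x * chi y := by
  have key : ∀ x y : ZMod 2, (x + y = 0 ↔ (x = 0 ↔ y = 0)) := by decide
  unfold chi
  by_cases hx : x = 0 <;> by_cases hy : y = 0 <;> simp [key, hx, hy]

lemma ip_add {n : ℕ} (a a' b : Fin n → ZMod 2) :
    ip (a + a') b = ip a b + ip a' b := by
  simp [ip, add_mul, Finset.sum_add_distrib]

lemma abs_chi (x : ZMod 2) : |chi x| = 1 := by
  unfold chi; split <;> simp

open scoped Classical in
/-- Sums of pairs from Spec_ε(B) land in Spec_{ε²/2}(B) with probability ≥ ε²/2. -/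
theorem stmt_3 {n : ℕ} (A B : Finset (Fin n → ZMod 2)) (hA : A.Nonempty) (hB : B.Nonempty)
    (ε : ℝ) (hε : 0 < ε) (h : ∀ x ∈ A, x ∈ Spec ε B) :
    ε ^ 2 ≤ (∑ a ∈ A, ∑ a' ∈ A, |∑ b ∈ B, chi (ip (a + a') b)| / (B.card : ℝ)) /
        ((A.card : ℝ) ^ 2) ∧
    (ε ^ 2 / 2) * (A.card : ℝ) ^ 2 ≤
      (((A ×ˢ A).filter fun p => p.1 + p.2 ∈ Spec (ε ^ 2 / 2) B).card : ℝ) := by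
  have hm : (0:ℝ) < A.card := by exact_mod_cast Finset.card_pos.2 hA
  have hk : (0:ℝ) < B.card := by exact_mod_cast Finset.card_pos.2 hB
  set m : ℝ := (A.card : ℝ) with hmdef
  set k : ℝ := (B.card : ℝ) with hkdef
  set σ : (Fin n → ZMod 2) → ℝ :=
    fun a => if 0 ≤ ∑ b ∈ B, chi (ip a b) then (1:ℝ) else -1 with hσ
  have hσabs : ∀ a, σ a * ∑ b ∈ B, chi (ip a b) = |∑ b ∈ B, chi (ip a b)| := by
    intro a
    rcases le_or_gt 0 (∑ b ∈ B, chi (ip a b)) with h0 | h0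
    · simp [hσ, h0, abs_of_nonneg h0]
    · simp [hσ, not_le.2 h0, abs_of_neg h0]
  have hσone : ∀ a, |σ a| = 1 := by
    intro a; simp only [hσ]; split <;> norm_num
  -- Step A: ε * m * k ≤ ∑ a, σ a * ∑ b χ
  have hstepA : ε * m * k ≤ ∑ a ∈ A, σ a * ∑ b ∈ B, chi (ip a b) := by
    have hterm : ∀ a ∈ A, ε * k ≤ σ a * ∑ b ∈ B, chi (ip a b) := by
      intro a ha
      rw [hσabs a]
      have hspec := h a ha
      rw [Spec, Set.mem_setOf_eq] at hspec
      calc ε * k ≤ (|∑ b ∈ B, chi (ip a b)| / k) * k :=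
            mul_le_mul_of_nonneg_right hspec hk.le
        _ = |∑ b ∈ B, chi (ip a b)| := by field_simp
    calc ε * m * k = A.card • (ε * k) := by rw [nsmul_eq_mul]; ring
      _ ≤ _ := Finset.card_nsmul_le_sum A _ _ hterm
  -- swap sums
  have hswap : ∑ a ∈ A, σ a * ∑ b ∈ B, chi (ip a b)
      = ∑ b ∈ B, ∑ a ∈ A, σ a * chi (ip a b) := by
    simp_rw [Finset.mul_sum]
    exact Finset.sum_comm
  -- Cauchy–Schwarz
  have hCS : (∑ b ∈ B, ∑ a ∈ A, σ a * chi (ip a b)) ^ 2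
      ≤ k * ∑ b ∈ B, (∑ a ∈ A, σ a * chi (ip a b)) ^ 2 :=
    sq_sum_le_card_mul_sum_sq
  -- expand the square sum
  have hexp : ∑ b ∈ B, (∑ a ∈ A, σ a * chi (ip a b)) ^ 2
      = ∑ a ∈ A, ∑ a' ∈ A, σ a * σ a' * ∑ b ∈ B, chi (ip (a + a') b) := by
    have h1 : ∀ b, (∑ a ∈ A, σ a * chi (ip a b)) ^ 2
        = ∑ a ∈ A, ∑ a' ∈ A, σ a * σ a' * chi (ip (a + a') b) := by
      intro b
      rw [sq, Finset.sum_mul_sum]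
      refine Finset.sum_congr rfl fun a _ => Finset.sum_congr rfl fun a' _ => ?_
      rw [ip_add, chi_add]; ring
    simp_rw [h1, Finset.mul_sum]
    rw [Finset.sum_comm]
    refine Finset.sum_congr rfl fun a _ => Finset.sum_comm
  have habs : ∑ a ∈ A, ∑ a' ∈ A, σ a * σ a' * ∑ b ∈ B, chi (ip (a + a') b)
      ≤ ∑ a ∈ A, ∑ a' ∈ A, |∑ b ∈ B, chi (ip (a + a') b)| := by
    refine Finset.sum_le_sum fun a _ => Finset.sum_le_sum fun a' _ => ?_
    calc σ a * σ a' * ∑ b ∈ B, chi (ip (a + a') b)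
        ≤ |σ a * σ a' * ∑ b ∈ B, chi (ip (a + a') b)| := le_abs_self _
      _ = |∑ b ∈ B, chi (ip (a + a') b)| := by
          rw [abs_mul, abs_mul, hσone, hσone, one_mul, one_mul]
  -- main inequality on the raw double sum
  have hmain : ε ^ 2 * m ^ 2 * k
      ≤ ∑ a ∈ A, ∑ a' ∈ A, |∑ b ∈ B, chi (ip (a + a') b)| := by
    have h1 : (ε * m * k) ^ 2 ≤ k * ∑ a ∈ A, ∑ a' ∈ A,
        |∑ b ∈ B, chi (ip (a + a') b)| := by
      calc (ε * m * k) ^ 2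
          ≤ (∑ b ∈ B, ∑ a ∈ A, σ a * chi (ip a b)) ^ 2 := by
            rw [← hswap]
            have hnn : 0 ≤ ε * m * k := by positivity
            exact pow_le_pow_left₀ hnn (hswap ▸ hstepA) 2
        _ ≤ k * ∑ b ∈ B, (∑ a ∈ A, σ a * chi (ip a b)) ^ 2 := hCS
        _ ≤ k * ∑ a ∈ A, ∑ a' ∈ A, |∑ b ∈ B, chi (ip (a + a') b)| := by
            rw [hexp] at *
            exact mul_le_mul_of_nonneg_left habs hk.le
    have h2 : (ε * m * k) ^ 2 = (ε ^ 2 * m ^ 2 * k) * k := by ring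
    rw [h2] at h1
    exact le_of_mul_le_mul_right (by linarith [h1]) hk
  -- rewrite double sum with division
  have hdiv : ∑ a ∈ A, ∑ a' ∈ A, |∑ b ∈ B, chi (ip (a + a') b)| / k
      = (∑ a ∈ A, ∑ a' ∈ A, |∑ b ∈ B, chi (ip (a + a') b)|) / k := by
    simp_rw [Finset.sum_div]
  have part1 : ε ^ 2 ≤ (∑ a ∈ A, ∑ a' ∈ A, |∑ b ∈ B, chi (ip (a + a') b)| / k) / m ^ 2 := by
    rw [hdiv, div_div, le_div_iff₀ (by positivity)]
    calc ε ^ 2 * (k * m ^ 2) = ε ^ 2 * m ^ 2 * k := by ring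
      _ ≤ _ := hmain
  refine ⟨part1, ?_⟩
  -- Part 2: Markov
  set P := (A ×ˢ A).filter fun p : (Fin n → ZMod 2) × (Fin n → ZMod 2) =>
    p.1 + p.2 ∈ Spec (ε ^ 2 / 2) B with hP
  set g : (Fin n → ZMod 2) × (Fin n → ZMod 2) → ℝ :=
    fun p => |∑ b ∈ B, chi (ip (p.1 + p.2) b)| / k with hg
  have hgle : ∀ p, g p ≤ 1 := by
    intro p
    rw [hg]
    have : |∑ b ∈ B, chi (ip (p.1 + p.2) b)| ≤ k := by
      calc |∑ b ∈ B, chi (ip (p.1 + p.2) b)| ≤ ∑ b ∈ B, |chi (ip (p.1 + p.2) b)| :=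
            Finset.abs_sum_le_sum_abs _ _
        _ = k := by simp [abs_chi, hkdef]
    exact div_le_one_of_le₀ this hk.le
  have hgnn : ∀ p, 0 ≤ g p := fun p => by positivity
  have hsum_g : ε ^ 2 * m ^ 2 ≤ ∑ p ∈ A ×ˢ A, g p := by
    rw [Finset.sum_product]
    calc ε ^ 2 * m ^ 2 = (ε ^ 2 * m ^ 2 * k) / k := by field_simp
      _ ≤ (∑ a ∈ A, ∑ a' ∈ A, |∑ b ∈ B, chi (ip (a + a') b)|) / k := by gcongr
      _ = ∑ a ∈ A, ∑ a' ∈ A, g (a, a') := by simp_rw [hg, Finset.sum_div]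
  have hsplit := Finset.sum_filter_add_sum_filter_not (A ×ˢ A)
    (fun p : (Fin n → ZMod 2) × (Fin n → ZMod 2) => p.1 + p.2 ∈ Spec (ε ^ 2 / 2) B) g
  have h1 : ∑ p ∈ P, g p ≤ (P.card : ℝ) := by
    calc ∑ p ∈ P, g p ≤ ∑ _p ∈ P, (1:ℝ) := Finset.sum_le_sum fun p _ => hgle p
      _ = P.card := by simp
  set Q := (A ×ˢ A).filter fun p : (Fin n → ZMod 2) × (Fin n → ZMod 2) =>
    ¬ (p.1 + p.2 ∈ Spec (ε ^ 2 / 2) B) with hQ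
  have h2 : ∑ p ∈ Q, g p ≤ ε ^ 2 / 2 * m ^ 2 := by
    have hQcard : (Q.card : ℝ) ≤ m ^ 2 := by
      have : Q.card ≤ (A ×ˢ A).card := Finset.card_filter_le _ _
      rw [Finset.card_product] at this
      calc (Q.card : ℝ) ≤ (A.card * A.card : ℕ) := by exact_mod_cast this
        _ = m ^ 2 := by push_cast [hmdef]; ring
    calc ∑ p ∈ Q, g p ≤ ∑ _p ∈ Q, (ε ^ 2 / 2) := by
          refine Finset.sum_le_sum fun p hp => ?_
          rw [hQ, Finset.mem_filter] at hp
          have hns := hp.2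
          rw [Spec, Set.mem_setOf_eq, not_le] at hns
          rw [hg]
          exact le_of_lt hns
      _ = Q.card * (ε ^ 2 / 2) := by rw [Finset.sum_const, nsmul_eq_mul]
      _ ≤ m ^ 2 * (ε ^ 2 / 2) := mul_le_mul_of_nonneg_right hQcard (by positivity)
      _ = ε ^ 2 / 2 * m ^ 2 := by ring
  linarith [hsum_g, hsplit, h1, h2]
end

section
/- If A, B ⊆ 𝔽₂ⁿ are nonempty finite sets with D(A,B) ≥ ε > 0, then there exist subsets A' ⊆ A and B' ⊆ B with |A'| ≥ (ε/4)|A| and |B'| ≥ (ε²/4)·(|A|/|span(A)|)·|B| such that D(A',B') = 1. -/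
open Finset

lemma zmod2_cases' : ∀ x : ZMod 2, x = 0 ∨ x = 1 := by decide

lemma zmod2_cases (x : ZMod 2) : x = 0 ∨ x = 1 := zmod2_cases' x

lemma chi_cases (x : ZMod 2) : chi x = 1 ∨ chi x = -1 := by
  unfold chi; split <;> simp

lemma chi_mul (x y : ZMod 2) : chi x * chi y = chi (x + y) := by
  have h2 : (1 + 1 : ZMod 2) = 0 := by decide
  rcases zmod2_cases x with rfl | rfl <;>
    rcases zmod2_cases y with rfl | rfl <;>
      simp [chi, h2]

lemma chi_one_add (x : ZMod 2) : chi (1 + x) = - chi x := by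
  have h2 : (1 + 1 : ZMod 2) = 0 := by decide
  rcases zmod2_cases x with rfl | rfl <;> simp [chi, h2]

lemma zmod2_add_eq_zero {n : ℕ} (x y : Fin n → ZMod 2) : x + y = 0 ↔ x = y := by
  constructor
  · intro h
    funext i
    have h' : x i + y i = 0 := by simpa using congrFun h i
    have key : ∀ u w : ZMod 2, u + w = 0 → u = w := by decide
    exact key _ _ h'
  · rintro rfl
    funext i
    have key : ∀ u : ZMod 2, u + u = 0 := by decide
    simpa using key (x i)

/-- The linear functional `a ↦ ip a b`. -/
def ipL {n : ℕ} (b : Fin n → ZMod 2) : (Fin n → ZMod 2) →ₗ[ZMod 2] ZMod 2 where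
  toFun a := ip a b
  map_add' a a' := by simp [ip, add_mul, Finset.sum_add_distrib]
  map_smul' c a := by simp [ip, Finset.mul_sum, mul_assoc]

@[simp] lemma ipL_apply {n : ℕ} (b a : Fin n → ZMod 2) : ipL b a = ip a b := rfl

set_option maxHeartbeats 1000000

/-- Approximate duality for sets with small span (Ben-Sasson–Zewi). -/
theorem stmt_4 {n : ℕ} (A B : Finset (Fin n → ZMod 2)) (hA : A.Nonempty) (hB : B.Nonempty)
    (ε : ℝ) (hε : 0 < ε) (h : ε ≤ Dm A B) :
    ∃ A' ⊆ A, ∃ B' ⊆ B,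
      (ε / 4) * A.card ≤ (A'.card : ℝ) ∧
      (ε ^ 2 / 4) * ((A.card : ℝ) /
          (Nat.card (Submodule.span (ZMod 2) (A : Set (Fin n → ZMod 2))) : ℝ)) * B.card
        ≤ (B'.card : ℝ) ∧
      Dm A' B' = 1 := by
  classical
  set G := Submodule.span (ZMod 2) (A : Set (Fin n → ZMod 2)) with hG
  haveI : Fintype G := Fintype.ofFinite _
  haveI : Finite (Module.Dual (ZMod 2) G) :=
    Finite.of_injective (fun ψ => (ψ : G → ZMod 2)) DFunLike.coe_injective
  haveI : Fintype (Module.Dual (ZMod 2) G) := Fintype.ofFinite _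
  have hcard : Fintype.card (Module.Dual (ZMod 2) G) = Nat.card G := by
    rw [Nat.card_eq_fintype_card]
    exact (Fintype.card_congr (Module.finBasis (ZMod 2) G).toDualEquiv.toEquiv).symm
  have hone : ∀ x : ZMod 2, x ≠ 0 → x = 1 := by decide
  -- orthogonality over the dual group
  have dsum : ∀ v : G, ∑ ψ : Module.Dual (ZMod 2) G, chi (ψ v)
      = if v = 0 then (Fintype.card (Module.Dual (ZMod 2) G) : ℝ) else 0 := by
    intro v
    by_cases hv : v = 0
    · simp [hv, chi]
    · simp only [if_neg hv]
      have hnf : ¬ ∀ ψ : Module.Dual (ZMod 2) G, ψ v = 0 := by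
        rw [Module.forall_dual_apply_eq_zero_iff]; exact hv
      obtain ⟨ψ₀, hψ₀⟩ := not_forall.mp hnf
      have h1 : ψ₀ v = 1 := hone _ hψ₀
      have hsum := Fintype.sum_equiv (Equiv.addRight ψ₀)
        (fun ψ => chi ((ψ + ψ₀) v)) (fun ψ => chi (ψ v)) (fun ψ => rfl)
      have hneg : ∀ ψ : Module.Dual (ZMod 2) G, chi ((ψ + ψ₀) v) = - chi (ψ v) := by
        intro ψ
        rw [LinearMap.add_apply, h1, add_comm, chi_one_add]
      rw [Finset.sum_congr rfl fun ψ _ => hneg ψ, Finset.sum_neg_distrib] at hsum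
      linarith
  -- the Fourier coefficient
  set T : Module.Dual (ZMod 2) G → ℝ :=
    fun ψ => ∑ a ∈ A.attach, chi (ψ ⟨a.1, Submodule.subset_span a.2⟩) with hT
  have parseval : ∑ ψ : Module.Dual (ZMod 2) G, (T ψ)^2
      = (A.card : ℝ) * (Nat.card G : ℝ) := by
    have expand : ∀ ψ : Module.Dual (ZMod 2) G, (T ψ)^2
        = ∑ a ∈ A.attach, ∑ a' ∈ A.attach,
            chi (ψ ((⟨a.1, Submodule.subset_span a.2⟩ : G)
              + ⟨a'.1, Submodule.subset_span a'.2⟩)) := by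
      intro ψ
      rw [sq, hT, Finset.sum_mul_sum]
      refine Finset.sum_congr rfl fun a _ => Finset.sum_congr rfl fun a' _ => ?_
      rw [chi_mul, map_add]
    rw [Finset.sum_congr rfl fun ψ _ => expand ψ]
    rw [Finset.sum_comm]
    have inner : ∀ a ∈ A.attach, (∑ ψ : Module.Dual (ZMod 2) G, ∑ a' ∈ A.attach,
        chi (ψ ((⟨a.1, Submodule.subset_span a.2⟩ : G)
          + ⟨a'.1, Submodule.subset_span a'.2⟩)))
        = (Fintype.card (Module.Dual (ZMod 2) G) : ℝ) := by
      intro a _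
      rw [Finset.sum_comm]
      have : ∀ a' ∈ A.attach, (∑ ψ : Module.Dual (ZMod 2) G,
          chi (ψ ((⟨a.1, Submodule.subset_span a.2⟩ : G)
            + ⟨a'.1, Submodule.subset_span a'.2⟩)))
          = if a = a' then (Fintype.card (Module.Dual (ZMod 2) G) : ℝ) else 0 := by
        intro a' _
        rw [dsum]
        congr 1
        have : ((⟨a.1, Submodule.subset_span a.2⟩ : G)
            + ⟨a'.1, Submodule.subset_span a'.2⟩) = 0 ↔ a = a' := by
          rw [← Submodule.coe_eq_zero]
          push_cast
          rw [zmod2_add_eq_zero]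
          exact ⟨fun hh => Subtype.ext hh, fun hh => congrArg _ hh⟩
        simp only [this]
      rw [Finset.sum_congr rfl this, Finset.sum_ite_eq]
      simp
    rw [Finset.sum_congr rfl inner, Finset.sum_const, Finset.card_attach,
      nsmul_eq_mul, hcard]
  -- functional associated to each b
  set ψb : (Fin n → ZMod 2) → Module.Dual (ZMod 2) G :=
    fun b => (ipL b).domRestrict G with hψb
  have hψb_apply : ∀ (b : Fin n → ZMod 2) (a : Fin n → ZMod 2) (ha : a ∈ G),
      ψb b ⟨a, ha⟩ = ip a b := fun b a ha => rfl
  -- basic positivity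
  have hAc : (0:ℝ) < A.card := by exact_mod_cast hA.card_pos
  have hBc : (0:ℝ) < B.card := by exact_mod_cast hB.card_pos
  have hK : (0:ℝ) < (Nat.card G : ℝ) := by exact_mod_cast Nat.card_pos (α := G)
  -- ε ≤ 1
  have habs : ∀ (S S' : Finset (Fin n → ZMod 2)),
      |∑ a ∈ S, ∑ b ∈ S', chi (ip a b)| ≤ (S.card : ℝ) * S'.card := by
    intro S S'
    calc |∑ a ∈ S, ∑ b ∈ S', chi (ip a b)| ≤ ∑ a ∈ S, |∑ b ∈ S', chi (ip a b)| :=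
          Finset.abs_sum_le_sum_abs _ _
      _ ≤ ∑ a ∈ S, ∑ b ∈ S', |chi (ip a b)| :=
          Finset.sum_le_sum fun a _ => Finset.abs_sum_le_sum_abs _ _
      _ = (S.card : ℝ) * S'.card := by simp [abs_chi, mul_comm]
  have hε1 : ε ≤ 1 := by
    refine h.trans ?_
    rw [Dm, div_le_one (mul_pos hAc hBc)]
    exact habs A B
  -- step 1
  have step1 : ε * ((A.card : ℝ) * B.card) ≤ |∑ a ∈ A, ∑ b ∈ B, chi (ip a b)| := by
    rw [Dm, le_div_iff₀ (mul_pos hAc hBc)] at h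
    linarith
  -- rewrite double sum via T
  have swap : ∑ a ∈ A, ∑ b ∈ B, chi (ip a b) = ∑ b ∈ B, T (ψb b) := by
    rw [Finset.sum_comm]
    refine Finset.sum_congr rfl fun b _ => ?_
    rw [← Finset.sum_attach A (fun a => chi (ip a b))]
    simp only [hT, hψb, LinearMap.domRestrict_apply, ipL_apply]
  set I := B.image ψb with hI
  set cfib : Module.Dual (ZMod 2) G → ℕ :=
    fun ψ => (B.filter (fun b => ψb b = ψ)).card with hcfib
  have step3 : ∑ b ∈ B, |T (ψb b)| = ∑ ψ ∈ I, (cfib ψ : ℝ) * |T ψ| := by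
    rw [Finset.sum_comp (fun ψ => |T ψ|) ψb]
    simp [hcfib, nsmul_eq_mul, hI]
  -- maximizing fiber
  obtain ⟨ψs, hψsI, hmaxψ⟩ := Finset.exists_max_image I cfib (hB.image ψb)
  set B' := B.filter (fun b => ψb b = ψs) with hB'
  have hB'sub : B' ⊆ B := Finset.filter_subset _ _
  -- the chain of inequalities giving the size of B'
  have cs := Finset.sum_mul_sq_le_sq_mul_sq I (fun ψ => (cfib ψ : ℝ)) (fun ψ => |T ψ|)
  have hfibsum : ∑ ψ ∈ I, (cfib ψ : ℝ) = (B.card : ℝ) := by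
    rw [← Nat.cast_sum]
    exact congrArg (fun k : ℕ => (k : ℝ)) (Finset.card_eq_sum_card_image ψb B).symm
  have hsq1 : ∑ ψ ∈ I, ((cfib ψ : ℝ))^2 ≤ (B'.card : ℝ) * B.card := by
    have : ∀ ψ ∈ I, ((cfib ψ : ℝ))^2 ≤ (B'.card : ℝ) * (cfib ψ : ℝ) := by
      intro ψ hψ
      have h1 : (cfib ψ : ℝ) ≤ (B'.card : ℝ) := by exact_mod_cast hmaxψ ψ hψ
      have h0 : (0:ℝ) ≤ (cfib ψ : ℝ) := Nat.cast_nonneg _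
      nlinarith
    calc ∑ ψ ∈ I, ((cfib ψ : ℝ))^2 ≤ ∑ ψ ∈ I, (B'.card : ℝ) * (cfib ψ : ℝ) :=
          Finset.sum_le_sum this
      _ = (B'.card : ℝ) * B.card := by rw [← Finset.mul_sum, hfibsum]
  have hsq2 : ∑ ψ ∈ I, (|T ψ|)^2 ≤ (A.card : ℝ) * (Nat.card G : ℝ) := by
    rw [← parseval]
    have : ∀ ψ ∈ I, (|T ψ|)^2 = (T ψ)^2 := fun ψ _ => sq_abs _
    rw [Finset.sum_congr rfl this]
    exact Finset.sum_le_sum_of_subset_of_nonneg (Finset.subset_univ I)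
      (fun ψ _ _ => sq_nonneg _)
  have key : (ε * ((A.card : ℝ) * B.card))^2
      ≤ ((B'.card : ℝ) * B.card) * ((A.card : ℝ) * (Nat.card G : ℝ)) := by
    have h2 : ε * ((A.card : ℝ) * B.card) ≤ ∑ ψ ∈ I, (cfib ψ : ℝ) * |T ψ| := by
      calc ε * ((A.card : ℝ) * B.card) ≤ |∑ a ∈ A, ∑ b ∈ B, chi (ip a b)| := step1
        _ = |∑ b ∈ B, T (ψb b)| := by rw [swap]
        _ ≤ ∑ b ∈ B, |T (ψb b)| := Finset.abs_sum_le_sum_abs _ _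
        _ = ∑ ψ ∈ I, (cfib ψ : ℝ) * |T ψ| := step3
    have h3 : (0:ℝ) ≤ ε * ((A.card : ℝ) * B.card) :=
      le_of_lt (mul_pos hε (mul_pos hAc hBc))
    calc (ε * ((A.card : ℝ) * B.card))^2 ≤ (∑ ψ ∈ I, (cfib ψ : ℝ) * |T ψ|)^2 := by
          nlinarith
      _ ≤ (∑ ψ ∈ I, ((cfib ψ : ℝ))^2) * (∑ ψ ∈ I, (|T ψ|)^2) := cs
      _ ≤ ((B'.card : ℝ) * B.card) * ((A.card : ℝ) * (Nat.card G : ℝ)) := by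
          have := hsq2
          have h0 : (0:ℝ) ≤ ∑ ψ ∈ I, ((cfib ψ : ℝ))^2 :=
            Finset.sum_nonneg fun _ _ => sq_nonneg _
          have h0' : (0:ℝ) ≤ ∑ ψ ∈ I, (|T ψ|)^2 :=
            Finset.sum_nonneg fun _ _ => sq_nonneg _
          nlinarith [hsq1]
  have hB'card : (ε ^ 2 / 4) * ((A.card : ℝ) / (Nat.card G : ℝ)) * B.card
      ≤ (B'.card : ℝ) := by
    have e1 : (ε ^ 2 / 4) * ((A.card : ℝ) / (Nat.card G : ℝ)) * B.card
        = (ε ^ 2 * A.card * B.card) / (4 * (Nat.card G : ℝ)) := by ring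
    rw [e1, div_le_iff₀ (mul_pos four_pos hK)]
    nlinarith [key, mul_pos hAc hBc, mul_pos (mul_pos (pow_pos hε 2) hAc) hBc,
      mul_nonneg (mul_nonneg (Nat.cast_nonneg B'.card) (le_of_lt hK))
        (le_of_lt (mul_pos hAc hBc))]
  -- B' is nonempty
  have hB'pos : (0:ℝ) < (B'.card : ℝ) := by
    have : (0:ℝ) < (ε ^ 2 / 4) * ((A.card : ℝ) / (Nat.card G : ℝ)) * B.card :=
      mul_pos (mul_pos (div_pos (pow_pos hε 2) (by norm_num)) (div_pos hAc hK)) hBc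
    linarith
  have hB'ne : B'.Nonempty := by
    rw [← Finset.card_pos]
    exact_mod_cast hB'pos
  obtain ⟨b₀, hb₀⟩ := hB'ne
  have hb₀B : b₀ ∈ B := hB'sub hb₀
  -- constancy of ip on B'
  have hconst : ∀ a ∈ A, ∀ b ∈ B', ip a b = ip a b₀ := by
    intro a ha b hb
    have h1 : ψb b = ψs := (Finset.mem_filter.mp hb).2
    have h2 : ψb b₀ = ψs := (Finset.mem_filter.mp hb₀).2
    have haG : a ∈ G := Submodule.subset_span ha
    calc ip a b = ψb b ⟨a, haG⟩ := (hψb_apply b a haG).symm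
      _ = ψb b₀ ⟨a, haG⟩ := by rw [h1, h2]
      _ = ip a b₀ := hψb_apply b₀ a haG
  -- split A by the value of ip · b₀
  set A0 := A.filter (fun a => ip a b₀ = 0) with hA0
  set A1 := A.filter (fun a => ¬ (ip a b₀ = 0)) with hA1
  have hsplit : A0.card + A1.card = A.card :=
    Finset.card_filter_add_card_filter_not _
  -- the general final step
  have final : ∀ (A' : Finset (Fin n → ZMod 2)) (v : ZMod 2), A' ⊆ A →
      (∀ a ∈ A', ip a b₀ = v) → A.card ≤ 2 * A'.card →
      ∃ A'' ⊆ A, ∃ B'' ⊆ B,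
        (ε / 4) * A.card ≤ (A''.card : ℝ) ∧
        (ε ^ 2 / 4) * ((A.card : ℝ) / (Nat.card G : ℝ)) * B.card ≤ (B''.card : ℝ) ∧
        Dm A'' B'' = 1 := by
    intro A' v hsub hval hbig
    refine ⟨A', hsub, B', hB'sub, ?_, hB'card, ?_⟩
    · have h2 : (A.card : ℝ) ≤ 2 * A'.card := by exact_mod_cast hbig
      nlinarith
    · have hA'pos : (0:ℝ) < (A'.card : ℝ) := by
        have : (1:ℝ) ≤ (A.card : ℝ) := by exact_mod_cast hA.card_pos
        have h2 : (A.card : ℝ) ≤ 2 * A'.card := by exact_mod_cast hbig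
        linarith
      have hval' : ∀ a ∈ A', ∀ b ∈ B', chi (ip a b) = chi v := by
        intro a ha b hb
        rw [hconst a (hsub ha) b hb, hval a ha]
      have : ∑ a ∈ A', ∑ b ∈ B', chi (ip a b) = (A'.card : ℝ) * B'.card * chi v := by
        calc ∑ a ∈ A', ∑ b ∈ B', chi (ip a b) = ∑ a ∈ A', ∑ b ∈ B', chi v :=
            Finset.sum_congr rfl fun a ha => Finset.sum_congr rfl fun b hb => hval' a ha b hb
          _ = (A'.card : ℝ) * B'.card * chi v := by
            simp [Finset.sum_const, nsmul_eq_mul]; ring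
      rw [Dm, this, abs_mul, abs_chi, mul_one, abs_of_pos (mul_pos hA'pos hB'pos)]
      exact div_self (mul_pos hA'pos hB'pos).ne'
  rcases le_total A0.card A1.card with hc | hc
  · refine final A1 1 (Finset.filter_subset _ _) ?_ (by omega)
    intro a ha
    exact hone _ (Finset.mem_filter.mp ha).2
  · refine final A0 0 (Finset.filter_subset _ _) ?_ (by omega)
    intro a ha
    exact (Finset.mem_filter.mp ha).2
end

section
/- Define A: ℕ × ℕ → ℕ recursively by A(m,r) ≤ A(m, ⌈r/2⌉) + A(⌈m/2⌉, r) for m, r > 1, with A(1,r) ≤ 1 and A(m,1) ≤ 1. Then A(m,r) ≤ C(log₂m + log₂r, log₂r), the binomial coefficient, for all m, r that are powers of 2. -/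
/-- The Nisan–Wigderson style recursion A(m,r) ≤ A(m,⌈r/2⌉) + A(⌈m/2⌉,r) with boundary
values ≤ 1 is bounded by the binomial coefficient C(log₂m + log₂r, log₂r) on powers of 2. -/
theorem stmt_15 (f : ℕ → ℕ → ℕ)
    (h1 : ∀ r, f 1 r ≤ 1) (h2 : ∀ m, f m 1 ≤ 1)
    (hrec : ∀ m r, 1 < m → 1 < r → f m r ≤ f m ((r + 1) / 2) + f ((m + 1) / 2) r) :
    ∀ a b : ℕ, f (2 ^ a) (2 ^ b) ≤ (a + b).choose b := by
  have key : ∀ n a b : ℕ, a + b = n → f (2 ^ a) (2 ^ b) ≤ (a + b).choose b := by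
    intro n
    induction n using Nat.strong_induction_on with
    | _ n ih =>
      intro a b hab
      match a, b with
      | 0, b => exact (h1 (2 ^ b)).trans (Nat.choose_pos (show b ≤ 0 + b by omega))
      | a + 1, 0 => exact (h2 _).trans (Nat.choose_pos (Nat.zero_le _))
      | a + 1, b + 1 =>
        have hm : 1 < 2 ^ (a + 1) := by
          have := Nat.one_lt_two_pow_iff (n := a + 1); omega
        have hr : 1 < 2 ^ (b + 1) := by
          have := Nat.one_lt_two_pow_iff (n := b + 1); omega
        have e1 : (2 ^ (b + 1) + 1) / 2 = 2 ^ b := by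
          rw [pow_succ]; omega
        have e2 : (2 ^ (a + 1) + 1) / 2 = 2 ^ a := by
          rw [pow_succ]; omega
        have h := hrec _ _ hm hr
        rw [e1, e2] at h
        have ihb : f (2 ^ (a + 1)) (2 ^ b) ≤ (a + 1 + b).choose b :=
          ih (a + 1 + b) (by omega) (a + 1) b rfl
        have iha : f (2 ^ a) (2 ^ (b + 1)) ≤ (a + (b + 1)).choose (b + 1) :=
          ih (a + (b + 1)) (by omega) a (b + 1) rfl
        calc f (2 ^ (a + 1)) (2 ^ (b + 1)) ≤ _ + _ := h
          _ ≤ (a + 1 + b).choose b + (a + (b + 1)).choose (b + 1) :=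
            Nat.add_le_add ihb iha
          _ = (a + 1 + (b + 1)).choose (b + 1) := by
            have : a + 1 + (b + 1) = (a + b + 1) + 1 := by omega
            rw [this, Nat.choose_succ_succ]
            congr 2 <;> omega
  intro a b
  exact key (a + b) a b rfl
end

section
/- A deterministic communication protocol (binary protocol tree) with t leaves for a function f: X × Y → {0,1} can be converted into a protocol for f with communication complexity O(log t). Concretely, CC(f) ≤ 2·log_{3/2}(t). -/
/-- A deterministic communication protocol tree: internal nodes are owned by one of the two
players and branch on a bit computed from that player's input; leaves output a value. -/
inductive Protocol (X Y : Type) : Type where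
  | leaf : Bool → Protocol X Y
  | nodeA : (X → Bool) → Protocol X Y → Protocol X Y → Protocol X Y
  | nodeB : (Y → Bool) → Protocol X Y → Protocol X Y → Protocol X Y

/-- The output of a protocol on inputs (x, y). -/
def Protocol.eval {X Y : Type} : Protocol X Y → X → Y → Bool
  | .leaf o, _, _ => o
  | .nodeA g P0 P1, x, y => if g x then (P1.eval x y) else (P0.eval x y)
  | .nodeB g P0 P1, x, y => if g y then (P1.eval x y) else (P0.eval x y)

/-- The number of leaves of a protocol tree. -/
def Protocol.leaves {X Y : Type} : Protocol X Y → ℕ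
  | .leaf _ => 1
  | .nodeA _ P0 P1 => P0.leaves + P1.leaves
  | .nodeB _ P0 P1 => P0.leaves + P1.leaves

/-- The depth (worst-case number of bits exchanged) of a protocol tree. -/
def Protocol.depth {X Y : Type} : Protocol X Y → ℕ
  | .leaf _ => 0
  | .nodeA _ P0 P1 => 1 + max P0.depth P1.depth
  | .nodeB _ P0 P1 => 1 + max P0.depth P1.depth

namespace CCAux

structure Split (X Y : Type) : Type where
  A : X → Bool
  B : Y → Bool
  Pv : Protocol X Y
  Pr : Protocol X Y

/-- Walk down the heavier child until it drops to ≤ 2t/3 leaves; return the rectangle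
condition for reaching that subtree, the subtree, and the contracted remainder. -/
def split {X Y : Type} (t : ℕ) : Protocol X Y → Split X Y
  | .leaf o => ⟨fun _ => true, fun _ => true, .leaf o, .leaf o⟩
  | .nodeA g P0 P1 =>
      if P0.leaves ≤ P1.leaves then
        if 3 * P1.leaves ≤ 2 * t then ⟨g, fun _ => true, P1, P0⟩
        else ⟨fun x => g x && (split t P1).A x, (split t P1).B, (split t P1).Pv,
              .nodeA g P0 (split t P1).Pr⟩
      else
        if 3 * P0.leaves ≤ 2 * t then ⟨fun x => !g x, fun _ => true, P0, P1⟩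
        else ⟨fun x => !g x && (split t P0).A x, (split t P0).B, (split t P0).Pv,
              .nodeA g (split t P0).Pr P1⟩
  | .nodeB g P0 P1 =>
      if P0.leaves ≤ P1.leaves then
        if 3 * P1.leaves ≤ 2 * t then ⟨fun _ => true, g, P1, P0⟩
        else ⟨(split t P1).A, fun y => g y && (split t P1).B y, (split t P1).Pv,
              .nodeB g P0 (split t P1).Pr⟩
      else
        if 3 * P0.leaves ≤ 2 * t then ⟨fun _ => true, fun y => !g y, P0, P1⟩
        else ⟨(split t P0).A, fun y => !g y && (split t P0).B y, (split t P0).Pv,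
              .nodeB g (split t P0).Pr P1⟩

lemma leaves_pos {X Y : Type} (P : Protocol X Y) : 1 ≤ P.leaves := by
  induction P with
  | leaf o => simp [Protocol.leaves]
  | nodeA g P0 P1 ih0 ih1 => simp [Protocol.leaves]; omega
  | nodeB g P0 P1 ih0 ih1 => simp [Protocol.leaves]; omega

lemma split_spec {X Y : Type} (t : ℕ) (ht : 2 ≤ t) (P : Protocol X Y)
    (hP : 2 * t + 1 ≤ 3 * P.leaves) :
    (∀ x y, P.eval x y =
      if (split t P).A x && (split t P).B y then (split t P).Pv.eval x y
      else (split t P).Pr.eval x y)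
    ∧ (split t P).Pv.leaves + (split t P).Pr.leaves = P.leaves
    ∧ 3 * (split t P).Pv.leaves ≤ 2 * t
    ∧ t + 1 ≤ 3 * (split t P).Pv.leaves := by
  induction P with
  | leaf o => simp [Protocol.leaves] at hP; omega
  | nodeA g P0 P1 ih0 ih1 =>
    have h0 := leaves_pos P0
    have h1 := leaves_pos P1
    simp only [Protocol.leaves] at hP
    rw [split]
    by_cases hle : P0.leaves ≤ P1.leaves
    · rw [if_pos hle]
      by_cases hstop : 3 * P1.leaves ≤ 2 * t
      · rw [if_pos hstop]
        refine ⟨?_, ?_, ?_, ?_⟩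
        · intro x y; cases hg : g x <;> simp [Protocol.eval, hg]
        · simp only [Protocol.leaves]; try omega
        · exact hstop
        · simp only [Protocol.leaves] at *; omega
      · rw [if_neg hstop]
        obtain ⟨he, hl, hu, hlo⟩ := ih1 (by omega)
        refine ⟨?_, ?_, hu, hlo⟩
        · intro x y
          simp only [Protocol.eval]
          by_cases hg : g x
          · simp only [hg, if_true, Bool.true_and]
            rw [he x y]
          · simp [hg]
        · simp only [Protocol.leaves]; try omega
    · rw [if_neg hle]
      by_cases hstop : 3 * P0.leaves ≤ 2 * t
      · rw [if_pos hstop]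
        refine ⟨?_, ?_, ?_, ?_⟩
        · intro x y; cases hg : g x <;> simp [Protocol.eval, hg]
        · simp only [Protocol.leaves]; try omega
        · exact hstop
        · simp only [Protocol.leaves] at *; omega
      · rw [if_neg hstop]
        obtain ⟨he, hl, hu, hlo⟩ := ih0 (by omega)
        refine ⟨?_, ?_, hu, hlo⟩
        · intro x y
          simp only [Protocol.eval]
          by_cases hg : g x
          · simp [hg]
          · simp only [hg, if_false, Bool.not_false, Bool.true_and, Bool.false_eq_true,
              Bool.not_true, Bool.false_and]
            rw [he x y]
        · simp only [Protocol.leaves]; try omega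
  | nodeB g P0 P1 ih0 ih1 =>
    have h0 := leaves_pos P0
    have h1 := leaves_pos P1
    simp only [Protocol.leaves] at hP
    rw [split]
    by_cases hle : P0.leaves ≤ P1.leaves
    · rw [if_pos hle]
      by_cases hstop : 3 * P1.leaves ≤ 2 * t
      · rw [if_pos hstop]
        refine ⟨?_, ?_, ?_, ?_⟩
        · intro x y; cases hg : g y <;> simp [Protocol.eval, hg]
        · simp only [Protocol.leaves]; try omega
        · exact hstop
        · simp only [Protocol.leaves] at *; omega
      · rw [if_neg hstop]
        obtain ⟨he, hl, hu, hlo⟩ := ih1 (by omega)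
        refine ⟨?_, ?_, hu, hlo⟩
        · intro x y
          simp only [Protocol.eval]
          by_cases hg : g y
          · simp only [hg, if_true, Bool.true_and, Bool.and_true]
            rw [he x y]
          · simp [hg]
        · simp only [Protocol.leaves]; try omega
    · rw [if_neg hle]
      by_cases hstop : 3 * P0.leaves ≤ 2 * t
      · rw [if_pos hstop]
        refine ⟨?_, ?_, ?_, ?_⟩
        · intro x y; cases hg : g y <;> simp [Protocol.eval, hg]
        · simp only [Protocol.leaves]; try omega
        · exact hstop
        · simp only [Protocol.leaves] at *; omega
      · rw [if_neg hstop]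
        obtain ⟨he, hl, hu, hlo⟩ := ih0 (by omega)
        refine ⟨?_, ?_, hu, hlo⟩
        · intro x y
          simp only [Protocol.eval]
          by_cases hg : g y
          · simp [hg]
          · simp only [hg, if_false, Bool.not_false, Bool.true_and, Bool.and_true,
              Bool.false_eq_true, Bool.not_true, Bool.and_false]
            rw [he x y]
        · simp only [Protocol.leaves]; try omega

lemma key_real (m t : ℕ) (hm : 1 ≤ m) (h : 3 * m ≤ 2 * t) :
    2 + 2 * Real.logb (3/2) m ≤ 2 * Real.logb (3/2) t := by
  have hm' : (1:ℝ) ≤ m := by exact_mod_cast hm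
  have h' : (3:ℝ)/2 * m ≤ t := by
    have : (3:ℝ) * m ≤ 2 * t := by exact_mod_cast h
    linarith
  have h1 : Real.logb (3/2) m + 1 = Real.logb (3/2) ((3/2) * m) := by
    rw [Real.logb_mul (by norm_num) (by positivity), Real.logb_self_eq_one (by norm_num)]
    ring
  have h2 : Real.logb (3/2) ((3/2)*m) ≤ Real.logb (3/2) t := by
    rw [Real.logb_le_logb (by norm_num) (by positivity) (by linarith)]
    exact h'
  nlinarith [h1, h2]

lemma main {X Y : Type} : ∀ (n : ℕ) (P : Protocol X Y), P.leaves ≤ n →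
    ∃ Q : Protocol X Y, (∀ x y, Q.eval x y = P.eval x y) ∧
      (Q.depth : ℝ) ≤ 2 * Real.logb (3 / 2) (P.leaves : ℝ) := by
  intro n
  induction n with
  | zero => intro P h; have := leaves_pos P; omega
  | succ n ih =>
    intro P hn
    match P with
    | .leaf o =>
      refine ⟨.leaf o, fun x y => rfl, ?_⟩
      simp [Protocol.depth, Protocol.leaves, Real.logb_one]
    | .nodeA g P0 P1 =>
      set P : Protocol X Y := .nodeA g P0 P1 with hPdef
      have ht2 : 2 ≤ P.leaves := by
        have := leaves_pos P0; have := leaves_pos P1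
        simp [hPdef, Protocol.leaves]; omega
      obtain ⟨he, hl, hu, hlo⟩ := split_spec P.leaves ht2 P (by omega)
      set s := split P.leaves P with hs
      have hv1 := leaves_pos s.Pv
      have hr1 := leaves_pos s.Pr
      obtain ⟨Qv, hQve, hQvd⟩ := ih s.Pv (by omega)
      obtain ⟨Qr, hQre, hQrd⟩ := ih s.Pr (by omega)
      refine ⟨.nodeA s.A Qr (.nodeB s.B Qr Qv), ?_, ?_⟩
      · intro x y
        rw [he x y]
        simp only [Protocol.eval]
        by_cases ha : s.A x <;> by_cases hb : s.B y <;>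
          simp [ha, hb, hQve, hQre]
      · have hdep : (Protocol.nodeA s.A Qr (.nodeB s.B Qr Qv)).depth
            ≤ 2 + max Qr.depth Qv.depth := by
          simp only [Protocol.depth]; omega
        have hkey1 : 2 + 2 * Real.logb (3/2) (s.Pr.leaves : ℝ)
            ≤ 2 * Real.logb (3/2) (P.leaves : ℝ) := key_real _ _ hr1 (by omega)
        have hkey2 : 2 + 2 * Real.logb (3/2) (s.Pv.leaves : ℝ)
            ≤ 2 * Real.logb (3/2) (P.leaves : ℝ) := key_real _ _ hv1 hu
        have hcast : ((Protocol.nodeA s.A Qr (.nodeB s.B Qr Qv)).depth : ℝ)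
            ≤ 2 + max (Qr.depth : ℝ) (Qv.depth : ℝ) := by
          have : ((Protocol.nodeA s.A Qr (.nodeB s.B Qr Qv)).depth : ℝ)
              ≤ ((2 + max Qr.depth Qv.depth : ℕ) : ℝ) := by exact_mod_cast hdep
          rw [Nat.cast_add, Nat.cast_max] at this
          exact_mod_cast this
        calc ((Protocol.nodeA s.A Qr (.nodeB s.B Qr Qv)).depth : ℝ)
            ≤ 2 + max (Qr.depth : ℝ) (Qv.depth : ℝ) := hcast
          _ ≤ 2 * Real.logb (3/2) (P.leaves : ℝ) := by
              rcases max_cases (Qr.depth : ℝ) (Qv.depth : ℝ) with ⟨hm, _⟩ | ⟨hm, _⟩ <;>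
                rw [hm] <;> linarith
    | .nodeB g P0 P1 =>
      set P : Protocol X Y := .nodeB g P0 P1 with hPdef
      have ht2 : 2 ≤ P.leaves := by
        have := leaves_pos P0; have := leaves_pos P1
        simp [hPdef, Protocol.leaves]; omega
      obtain ⟨he, hl, hu, hlo⟩ := split_spec P.leaves ht2 P (by omega)
      set s := split P.leaves P with hs
      have hv1 := leaves_pos s.Pv
      have hr1 := leaves_pos s.Pr
      obtain ⟨Qv, hQve, hQvd⟩ := ih s.Pv (by omega)
      obtain ⟨Qr, hQre, hQrd⟩ := ih s.Pr (by omega)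
      refine ⟨.nodeA s.A Qr (.nodeB s.B Qr Qv), ?_, ?_⟩
      · intro x y
        rw [he x y]
        simp only [Protocol.eval]
        by_cases ha : s.A x <;> by_cases hb : s.B y <;>
          simp [ha, hb, hQve, hQre]
      · have hdep : (Protocol.nodeA s.A Qr (.nodeB s.B Qr Qv)).depth
            ≤ 2 + max Qr.depth Qv.depth := by
          simp only [Protocol.depth]; omega
        have hkey1 : 2 + 2 * Real.logb (3/2) (s.Pr.leaves : ℝ)
            ≤ 2 * Real.logb (3/2) (P.leaves : ℝ) := key_real _ _ hr1 (by omega)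
        have hkey2 : 2 + 2 * Real.logb (3/2) (s.Pv.leaves : ℝ)
            ≤ 2 * Real.logb (3/2) (P.leaves : ℝ) := key_real _ _ hv1 hu
        have hcast : ((Protocol.nodeA s.A Qr (.nodeB s.B Qr Qv)).depth : ℝ)
            ≤ 2 + max (Qr.depth : ℝ) (Qv.depth : ℝ) := by
          have : ((Protocol.nodeA s.A Qr (.nodeB s.B Qr Qv)).depth : ℝ)
              ≤ ((2 + max Qr.depth Qv.depth : ℕ) : ℝ) := by exact_mod_cast hdep
          rw [Nat.cast_add, Nat.cast_max] at this
          exact_mod_cast this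
        calc ((Protocol.nodeA s.A Qr (.nodeB s.B Qr Qv)).depth : ℝ)
            ≤ 2 + max (Qr.depth : ℝ) (Qv.depth : ℝ) := hcast
          _ ≤ 2 * Real.logb (3/2) (P.leaves : ℝ) := by
              rcases max_cases (Qr.depth : ℝ) (Qv.depth : ℝ) with ⟨hm, _⟩ | ⟨hm, _⟩ <;>
                rw [hm] <;> linarith
end CCAux

/-- A protocol with t leaves can be converted to one for the same function of
communication complexity at most 2·log_{3/2}(t). -/
theorem stmt_16 (X Y : Type) (f : X → Y → Bool) (P : Protocol X Y)
    (hP : ∀ x y, P.eval x y = f x y) :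
    ∃ Q : Protocol X Y, (∀ x y, Q.eval x y = f x y) ∧
      (Q.depth : ℝ) ≤ 2 * Real.logb (3 / 2) (P.leaves : ℝ) := by
  obtain ⟨Q, hQe, hQd⟩ := CCAux.main P.leaves P le_rfl
  exact ⟨Q, fun x y => by rw [hQe x y, hP x y], hQd⟩
end

section
/- Let M be a {0,1}-valued matrix partitioned as M = [[Q, R],[S, T]] where Q is a monochromatic submatrix. Then rank(R) + rank(S) ≤ rank(M) + 1, where rank is over the real numbers. -/
open Matrix Submodule Module

lemma abstract_split {V V₁ V₂ : Type*} [AddCommGroup V] [Module ℝ V]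
    [AddCommGroup V₁] [Module ℝ V₁] [AddCommGroup V₂] [Module ℝ V₂]
    [FiniteDimensional ℝ V] [FiniteDimensional ℝ V₁] [FiniteDimensional ℝ V₂]
    (p₁ : V →ₗ[ℝ] V₁) (p₂ : V →ₗ[ℝ] V₂)
    (hp : ∀ v : V, p₁ v = 0 → p₂ v = 0 → v = 0)
    (W : Submodule ℝ V) (U₁ : Submodule ℝ V₁) (U₂ : Submodule ℝ V₂)
    (h₁ : U₁ ≤ W.map p₁)
    (h₂ : ∀ u ∈ U₂, ∃ w ∈ W, p₁ w = 0 ∧ p₂ w = u) :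
    finrank ℝ U₁ + finrank ℝ U₂ ≤ finrank ℝ W := by
  set f : W →ₗ[ℝ] V₁ := p₁.comp W.subtype with hf
  have key : finrank ℝ W = finrank ℝ (LinearMap.range f) + finrank ℝ (LinearMap.ker f) :=
    (f.finrank_range_add_finrank_ker).symm
  have hrange : LinearMap.range f = W.map p₁ := by
    rw [hf, LinearMap.range_comp, Submodule.range_subtype]
  have e₁ : finrank ℝ U₁ ≤ finrank ℝ (LinearMap.range f) := by
    rw [hrange]; exact Submodule.finrank_mono h₁
  set φ : LinearMap.ker f →ₗ[ℝ] V₂ := p₂.comp (W.subtype.comp (LinearMap.ker f).subtype)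
    with hφ
  have hinj : Function.Injective φ := by
    rintro ⟨⟨w, hw⟩, hkw⟩ ⟨⟨w', hw'⟩, hkw'⟩ h
    have hk : p₁ (w - w') = 0 := by
      have a1 : p₁ w = 0 := hkw
      have a2 : p₁ w' = 0 := hkw'
      rw [map_sub, a1, a2, sub_zero]
    have hk2 : p₂ (w - w') = 0 := by
      have : p₂ w = p₂ w' := h
      rw [map_sub, this, sub_self]
    have := hp _ hk hk2
    apply Subtype.ext; apply Subtype.ext
    exact sub_eq_zero.mp this
  have hle : U₂ ≤ LinearMap.range φ := by
    intro u hu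
    obtain ⟨w, hw, hw1, hw2⟩ := h₂ u hu
    exact ⟨⟨⟨w, hw⟩, by simpa [hf] using hw1⟩, hw2⟩
  have e₂ : finrank ℝ U₂ ≤ finrank ℝ (LinearMap.ker f) :=
    (Submodule.finrank_mono hle).trans_eq (LinearMap.finrank_range_of_inj hinj)
  omega

lemma matrix_rank_add_le {m n : Type*} [Fintype m] [Fintype n]
    (A B : Matrix m n ℝ) : (A + B).rank ≤ A.rank + B.rank := by
  unfold Matrix.rank
  rw [Matrix.mulVecLin_add]
  refine le_trans ?_ (Submodule.finrank_add_le_finrank_add_finrank _ _)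
  apply Submodule.finrank_mono
  rintro x ⟨y, rfl⟩
  exact Submodule.mem_sup.2 ⟨A.mulVecLin y, ⟨y, rfl⟩, B.mulVecLin y, ⟨y, rfl⟩, rfl⟩

lemma rank_aux {k₁ k₂ l₁ l₂ : ℕ} (R : Matrix (Fin k₁) (Fin l₂) ℝ)
    (S : Matrix (Fin k₂) (Fin l₁) ℝ) (T : Matrix (Fin k₂) (Fin l₂) ℝ) :
    R.rank + S.rank ≤ (fromBlocks 0 R S T).rank := by
  refine abstract_split (LinearMap.funLeft ℝ ℝ (Sum.inl : Fin k₁ → Fin k₁ ⊕ Fin k₂))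
    (LinearMap.funLeft ℝ ℝ (Sum.inr : Fin k₂ → Fin k₁ ⊕ Fin k₂))
    (fun v h1 h2 => ?_)
    (LinearMap.range (fromBlocks 0 R S T).mulVecLin)
    (LinearMap.range R.mulVecLin) (LinearMap.range S.mulVecLin) ?_ ?_
  · funext x
    cases x with
    | inl i => exact congrFun h1 i
    | inr i => exact congrFun h2 i
  · rintro x ⟨y, rfl⟩
    refine ⟨(fromBlocks 0 R S T).mulVec (Sum.elim 0 y), ⟨Sum.elim 0 y, rfl⟩, ?_⟩
    funext i
    simp [Matrix.fromBlocks_mulVec]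
  · rintro u ⟨y, rfl⟩
    refine ⟨(fromBlocks 0 R S T).mulVec (Sum.elim y 0), ⟨Sum.elim y 0, rfl⟩, ?_, ?_⟩
    · funext i
      simp [Matrix.fromBlocks_mulVec]
    · funext i
      simp [Matrix.fromBlocks_mulVec]

lemma rank_pert {k₁ k₂ l₁ l₂ : ℕ} (Q : Matrix (Fin k₁) (Fin l₁) ℝ)
    (R : Matrix (Fin k₁) (Fin l₂) ℝ) (S : Matrix (Fin k₂) (Fin l₁) ℝ)
    (T : Matrix (Fin k₂) (Fin l₂) ℝ) (c : ℝ) (hQ : ∀ i j, Q i j = c) :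
    (fromBlocks 0 R S T).rank ≤ (fromBlocks Q R S T).rank + 1 := by
  have hdecomp : fromBlocks 0 R S T = fromBlocks Q R S T +
      vecMulVec (Sum.elim (fun (_ : Fin k₁) => -c) (0 : Fin k₂ → ℝ))
        (Sum.elim (fun (_ : Fin l₁) => (1:ℝ)) (0 : Fin l₂ → ℝ)) := by
    ext i j
    cases i <;> cases j <;> simp [vecMulVec_apply, hQ]
  have hone : (vecMulVec (Sum.elim (fun (_ : Fin k₁) => -c) (0 : Fin k₂ → ℝ))
      (Sum.elim (fun (_ : Fin l₁) => (1:ℝ)) (0 : Fin l₂ → ℝ))).rank ≤ 1 := by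
    rw [vecMulVec_eq Unit]
    exact le_trans (Matrix.rank_mul_le_left _ _)
      (le_trans (Matrix.rank_le_card_width _) (by simp))
  calc (fromBlocks 0 R S T).rank ≤ (fromBlocks Q R S T).rank +
        (vecMulVec (Sum.elim (fun (_ : Fin k₁) => -c) (0 : Fin k₂ → ℝ))
          (Sum.elim (fun (_ : Fin l₁) => (1:ℝ)) (0 : Fin l₂ → ℝ))).rank := by
        rw [hdecomp]; exact matrix_rank_add_le _ _
    _ ≤ (fromBlocks Q R S T).rank + 1 := by omega

/-- If Q is a monochromatic block of the 0/1 block matrix M = [[Q,R],[S,T]], then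
rank(R) + rank(S) ≤ rank(M) + 1 over ℝ. -/
theorem stmt_17 {k₁ k₂ l₁ l₂ : ℕ}
    (M : Matrix (Fin k₁ ⊕ Fin k₂) (Fin l₁ ⊕ Fin l₂) ℝ)
    (h01 : ∀ i j, M i j = 0 ∨ M i j = 1)
    (c : ℝ) (hQ : ∀ i j, M (Sum.inl i) (Sum.inl j) = c) :
    (Matrix.of fun i j => M (Sum.inl i) (Sum.inr j)).rank +
      (Matrix.of fun i j => M (Sum.inr i) (Sum.inl j)).rank ≤ M.rank + 1 := by
  calc (Matrix.of fun i j => M (Sum.inl i) (Sum.inr j)).rank +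
        (Matrix.of fun i j => M (Sum.inr i) (Sum.inl j)).rank
      ≤ (fromBlocks 0 M.toBlocks₁₂ M.toBlocks₂₁ M.toBlocks₂₂).rank := rank_aux _ _ _
    _ ≤ (fromBlocks M.toBlocks₁₁ M.toBlocks₁₂ M.toBlocks₂₁ M.toBlocks₂₂).rank + 1 :=
        rank_pert _ _ _ _ c (fun i j => hQ i j)
    _ = M.rank + 1 := by rw [fromBlocks_toBlocks]
end
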